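/- arXiv:1008.3742 — 2 statements merged into one kernel-verified Lean document; each statement's English description precedes it below -/
import Mathlib

section
/- Let Σ₁ be a symmetric positive definite real n×n matrix and μ₁, μ₂ ∈ ℝⁿ with μ₁ ≠ μ₂. Then the supremum of (wᵀμ₁ − b)/√(wᵀΣ₁w) over all pairs (w, b) with w ∈ ℝⁿ nonzero and b ≥ wᵀμ₂ equals √((μ₁ − μ₂)ᵀΣ₁⁻¹(μ₁ − μ₂)), and it is attained at w⋆ = Σ₁⁻¹(μ₁ − μ₂) together with b⋆ = (w⋆)ᵀμ₂. -/
open Matrix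

/-- The supremum of `(wᵀμ₁ − b)/√(wᵀΣ₁w)` over nonzero `w` and `b ≥ wᵀμ₂` equals
`√((μ₁−μ₂)ᵀΣ₁⁻¹(μ₁−μ₂))`, attained at `w⋆ = Σ₁⁻¹(μ₁−μ₂)`, `b⋆ = (w⋆)ᵀμ₂`. -/
theorem biased_mpm_closed_form {n : ℕ} (S₁ : Matrix (Fin n) (Fin n) ℝ)
    (hS₁ : S₁.PosDef) (μ₁ μ₂ : Fin n → ℝ) (hμ : μ₁ ≠ μ₂) :
    IsGreatest
      {v : ℝ | ∃ w : Fin n → ℝ, ∃ b : ℝ, w ≠ 0 ∧ w ⬝ᵥ μ₂ ≤ b ∧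
          v = (w ⬝ᵥ μ₁ - b) / Real.sqrt (w ⬝ᵥ (S₁ *ᵥ w))}
      (Real.sqrt ((μ₁ - μ₂) ⬝ᵥ (S₁⁻¹ *ᵥ (μ₁ - μ₂)))) ∧
    ((S₁⁻¹ *ᵥ (μ₁ - μ₂)) ⬝ᵥ μ₁ - (S₁⁻¹ *ᵥ (μ₁ - μ₂)) ⬝ᵥ μ₂) /
        Real.sqrt ((S₁⁻¹ *ᵥ (μ₁ - μ₂)) ⬝ᵥ (S₁ *ᵥ (S₁⁻¹ *ᵥ (μ₁ - μ₂)))) =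
      Real.sqrt ((μ₁ - μ₂) ⬝ᵥ (S₁⁻¹ *ᵥ (μ₁ - μ₂))) := by
  set d : Fin n → ℝ := μ₁ - μ₂ with hd_def
  have hd : d ≠ 0 := sub_ne_zero.mpr hμ
  set u : Fin n → ℝ := S₁⁻¹ *ᵥ d with hu_def
  set q : ℝ := d ⬝ᵥ u with hq_def
  have hq : 0 < q := by
    have := hS₁.inv.dotProduct_mulVec_pos hd
    simpa [hq_def, hu_def] using this
  have hSu : S₁ *ᵥ u = d := by
    rw [hu_def, mulVec_mulVec, mul_nonsing_inv S₁ hS₁.det_pos.ne'.isUnit, one_mulVec]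
  have hsym : ∀ x y : Fin n → ℝ, x ⬝ᵥ (S₁ *ᵥ y) = y ⬝ᵥ (S₁ *ᵥ x) := by
    intro x y
    rw [dotProduct_mulVec, ← mulVec_transpose]
    have hT : S₁ᵀ = S₁ := by simpa [Matrix.IsHermitian] using hS₁.1
    rw [hT, dotProduct_comm]
  -- value at the optimum
  have hud : u ⬝ᵥ d = q := by rw [hq_def, dotProduct_comm]
  have huSu : u ⬝ᵥ (S₁ *ᵥ u) = q := by rw [hSu, hud]
  have hμsplit : ∀ w : Fin n → ℝ, w ⬝ᵥ μ₁ - w ⬝ᵥ μ₂ = w ⬝ᵥ d := by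
    intro w; rw [hd_def, dotProduct_sub]
  have hopt : (u ⬝ᵥ μ₁ - u ⬝ᵥ μ₂) / Real.sqrt (u ⬝ᵥ (S₁ *ᵥ u)) = Real.sqrt q := by
    rw [hμsplit u, hud, huSu, Real.div_sqrt]
  -- Cauchy–Schwarz
  have key : ∀ w : Fin n → ℝ, (w ⬝ᵥ d) ^ 2 ≤ (w ⬝ᵥ (S₁ *ᵥ w)) * q := by
    intro w
    set c : ℝ := w ⬝ᵥ d with hc_def
    set t : ℝ := -c / q with ht_def
    have hv : 0 ≤ (w + t • u) ⬝ᵥ (S₁ *ᵥ (w + t • u)) := by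
      have := hS₁.posSemidef.dotProduct_mulVec_nonneg (w + t • u)
      simpa using this
    have huSw : u ⬝ᵥ (S₁ *ᵥ w) = c := by rw [hsym u w, hSu, hc_def]
    have hwSu : w ⬝ᵥ (S₁ *ᵥ u) = c := by rw [hSu, hc_def]
    have hexp : (w + t • u) ⬝ᵥ (S₁ *ᵥ (w + t • u))
        = w ⬝ᵥ (S₁ *ᵥ w) + t * c + t * c + t * t * q := by
      rw [mulVec_add, mulVec_smul, add_dotProduct, smul_dotProduct,
        dotProduct_add, dotProduct_add, dotProduct_smul, dotProduct_smul,
        hwSu, huSw, huSu]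
      simp only [smul_eq_mul]
      rw [ht_def]
      field_simp
      ring
    rw [hexp] at hv
    have : t = -c / q := ht_def
    rw [this] at hv
    have hq' := hq.ne'
    have : 0 ≤ w ⬝ᵥ (S₁ *ᵥ w) - c ^ 2 / q := by
      have h2 : -c / q * c + -c / q * c + -c / q * (-c / q) * q = -(c ^ 2 / q) := by
        field_simp; ring
      nlinarith [hv, h2]
    have := (div_le_iff₀ hq).mp (by linarith : c ^ 2 / q ≤ w ⬝ᵥ (S₁ *ᵥ w))
    linarith
  constructor
  · constructor
    · exact ⟨u, u ⬝ᵥ μ₂, by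
        refine ⟨?_, le_refl _, ?_⟩
        · intro h
          apply hd
          have : S₁ *ᵥ u = 0 := by rw [h, mulVec_zero]
          rw [hSu] at this; exact this
        · rw [hopt]⟩
    · rintro v ⟨w, b, hw, hb, rfl⟩
      have hp : 0 < w ⬝ᵥ (S₁ *ᵥ w) := by
        have := hS₁.dotProduct_mulVec_pos hw; simpa using this
      set p : ℝ := w ⬝ᵥ (S₁ *ᵥ w) with hp_def
      have hsp : 0 < Real.sqrt p := Real.sqrt_pos.mpr hp
      have h1 : (w ⬝ᵥ μ₁ - b) / Real.sqrt p ≤ (w ⬝ᵥ d) / Real.sqrt p := by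
        have := hμsplit w
        gcongr
        linarith
      refine h1.trans ?_
      rw [div_le_iff₀ hsp]
      have hcs := key w
      rw [← hp_def] at hcs
      have hq2 : Real.sqrt q ^ 2 = q := Real.sq_sqrt hq.le
      have hp2 : Real.sqrt p ^ 2 = p := Real.sq_sqrt hp.le
      have hs2 : (Real.sqrt q * Real.sqrt p) ^ 2 = q * p := by rw [mul_pow, hq2, hp2]
      nlinarith [hcs, hs2, mul_nonneg (Real.sqrt_nonneg q) (Real.sqrt_nonneg p)]
  · exact hopt
end

section
/- For every γ ∈ (1/2, 1) one has Φ((2/3)·√(1/(2(1−γ)))) > γ, where Φ(t) = (gaussianReal 0 1)((−∞, t]) is the cumulative distribution function of the standard normal distribution. Equivalently, φ_SU(γ) = (2/3)√(1/(2(1−γ))) > Φ⁻¹(γ) for all γ ∈ (1/2, 1). -/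
open MeasureTheory ProbabilityTheory

namespace PhiSUAux

open Real Set Filter Topology

lemma pdf0_eq (x : ℝ) :
    gaussianPDFReal 0 1 x = (Real.sqrt (2 * Real.pi))⁻¹ * Real.exp (-(x ^ 2 / 2)) := by
  simp only [gaussianPDFReal, NNReal.coe_one, mul_one, sub_zero]
  ring_nf

lemma sqrt2pi_pos : 0 < Real.sqrt (2 * Real.pi) := Real.sqrt_pos.mpr (by positivity)

lemma sqrt2pi_lt : Real.sqrt (2 * Real.pi) < 2.5067 := by
  have h : (2 : ℝ) * Real.pi < 2.5067 ^ 2 := by nlinarith [Real.pi_lt_d6]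
  calc Real.sqrt (2 * Real.pi) < Real.sqrt (2.5067 ^ 2) :=
        Real.sqrt_lt_sqrt (by positivity) h
    _ = 2.5067 := Real.sqrt_sq (by norm_num)

lemma lt_sqrt2pi : 2.5066 < Real.sqrt (2 * Real.pi) := by
  have h : (2.5066 : ℝ) ^ 2 < 2 * Real.pi := by nlinarith [Real.pi_gt_d6]
  calc (2.5066 : ℝ) = Real.sqrt (2.5066 ^ 2) := (Real.sqrt_sq (by norm_num)).symm
    _ < Real.sqrt (2 * Real.pi) := Real.sqrt_lt_sqrt (by positivity) h

lemma cdf_eq (t : ℝ) :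
    (gaussianReal 0 1 (Set.Iic t)).toReal = ∫ x in Set.Iic t, gaussianPDFReal 0 1 x := by
  rw [gaussianReal_apply_eq_integral 0 one_ne_zero, ENNReal.toReal_ofReal]
  exact setIntegral_nonneg measurableSet_Iic fun x _ => gaussianPDFReal_nonneg 0 1 x

lemma total_eq_one : ∫ x, gaussianPDFReal 0 1 x = 1 :=
  integral_gaussianPDFReal_eq_one 0 one_ne_zero

lemma half : ∫ x in Set.Iic (0:ℝ), gaussianPDFReal 0 1 x = 1/2 := by
  have hint := integrable_gaussianPDFReal 0 1
  have htot : (∫ x in Set.Iic (0:ℝ), gaussianPDFReal 0 1 x)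
      + ∫ x in Set.Ioi (0:ℝ), gaussianPDFReal 0 1 x = 1 := by
    rw [intervalIntegral.integral_Iic_add_Ioi hint.integrableOn hint.integrableOn]
    exact total_eq_one
  have hsym : ∫ x in Set.Ioi (0:ℝ), gaussianPDFReal 0 1 x
      = ∫ x in Set.Iic (0:ℝ), gaussianPDFReal 0 1 x := by
    calc ∫ x in Set.Ioi (0:ℝ), gaussianPDFReal 0 1 x
        = ∫ x in Set.Ioi (0:ℝ), gaussianPDFReal 0 1 (-x) := by
          apply setIntegral_congr_fun measurableSet_Ioi
          intro x _
          simp [pdf0_eq, neg_pow]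
      _ = ∫ x in Set.Iic (-(0:ℝ)), gaussianPDFReal 0 1 x := integral_comp_neg_Ioi 0 _
      _ = ∫ x in Set.Iic (0:ℝ), gaussianPDFReal 0 1 x := by norm_num
  linarith

lemma hasDerivAt_negexp (x : ℝ) :
    HasDerivAt (fun y : ℝ => -Real.exp (-(y^2/2))) (x * Real.exp (-(x^2/2))) x := by
  have h1 : HasDerivAt (fun y : ℝ => -(y^2/2)) (-x) x := by
    exact ((hasDerivAt_pow 2 x).div_const 2).neg.congr_deriv (by norm_num)
  have h2 := (Real.hasDerivAt_exp (-(x^2/2))).comp x h1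
  have := h2.neg
  refine this.congr_deriv ?_
  ring

lemma tendsto_negexp : Tendsto (fun y : ℝ => -Real.exp (-(y^2/2))) atTop (𝓝 0) := by
  have h1 : Tendsto (fun y : ℝ => -(y^2/2)) atTop atBot := by
    apply tendsto_neg_atBot_iff.mpr
    exact (tendsto_pow_atTop (two_ne_zero)).atTop_div_const (by norm_num)
  have h2 : Tendsto (fun y : ℝ => Real.exp (-(y^2/2))) atTop (𝓝 0) :=
    Real.tendsto_exp_atBot.comp h1
  simpa using h2.neg

lemma tail_integral {t : ℝ} (ht : 0 < t) :
    ∫ x in Set.Ioi t, x * Real.exp (-(x^2/2)) = Real.exp (-(t^2/2)) := by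
  have := integral_Ioi_of_hasDerivAt_of_nonneg
    (g := fun y : ℝ => -Real.exp (-(y^2/2)))
    (g' := fun x : ℝ => x * Real.exp (-(x^2/2)))
    (Continuous.continuousWithinAt (by fun_prop))
    (fun x _ => hasDerivAt_negexp x)
    (fun x hx => mul_nonneg (le_of_lt (ht.trans hx)) (Real.exp_pos _).le) tendsto_negexp
  simpa using this

lemma tail_integrableOn {t : ℝ} (ht : 0 < t) :
    IntegrableOn (fun x => x * Real.exp (-(x^2/2))) (Set.Ioi t) := by
  apply integrableOn_Ioi_deriv_of_nonneg
    (Continuous.continuousWithinAt (by fun_prop))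
    (fun x _ => hasDerivAt_negexp x)
    (fun x hx => mul_nonneg (le_of_lt (ht.trans hx)) (Real.exp_pos _).le) tendsto_negexp


lemma exp_lb {x : ℝ} (h0 : 0 ≤ x) (h1 : x ≤ 1.4) :
    1 - x^2/2 + x^4/8 - x^6/48 - 5*x^8/1536 ≤ Real.exp (-(x^2/2)) := by
  have habs : |(-(x^2/2))| ≤ 1 := by
    rw [abs_neg, abs_of_nonneg (by positivity)]; nlinarith
  have hb := Real.exp_bound habs (n := 4) (by norm_num)
  have hsum : ∑ i ∈ Finset.range 4, (-(x^2/2))^i / (Nat.factorial i)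
      = 1 - x^2/2 + x^4/8 - x^6/48 := by
    simp [Finset.sum_range_succ, Nat.factorial]
    ring
  rw [hsum, abs_neg, abs_of_nonneg (by positivity : (0:ℝ) ≤ x^2/2)] at hb
  have h2 := (abs_le.mp hb).1
  norm_num [Nat.factorial] at h2
  nlinarith [h2]

lemma hasDerivAt_F (y : ℝ) :
    HasDerivAt (fun y : ℝ => y - y^3/6 + y^5/40 - y^7/336 - 5*y^9/13824)
      (1 - y^2/2 + y^4/8 - y^6/48 - 5*y^8/1536) y := by
  have h := ((((hasDerivAt_id y).sub ((hasDerivAt_pow 3 y).div_const 6)).add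
      ((hasDerivAt_pow 5 y).div_const 40)).sub
      ((hasDerivAt_pow 7 y).div_const 336)).sub
      (((hasDerivAt_pow 9 y).const_mul (5:ℝ)).div_const 13824)
  refine h.congr_deriv ?_
  norm_num
  ring

lemma polyA {t : ℝ} (h1 : 2/3 ≤ t) (h2 : t ≤ 1.4) :
    1 - 2/(9*t^2) < 1/2 + (t - t^3/6 + t^5/40 - t^7/336 - 5*t^9/13824)/2.5067 := by
  have ht0 : (0:ℝ) < t := by linarith
  have e : 1/2 + (t - t^3/6 + t^5/40 - t^7/336 - 5*t^9/13824)/2.5067 - (1 - 2/(9*t^2))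
      = (9*t^2*(t - t^3/6 + t^5/40 - t^7/336 - 5*t^9/13824)
          + 2.5067*(2 - 4.5*t^2)) / (2.5067*(9*t^2)) := by
    field_simp
    ring
  have hpos : 0 < (9*t^2*(t - t^3/6 + t^5/40 - t^7/336 - 5*t^9/13824)
          + 2.5067*(2 - 4.5*t^2)) / (2.5067*(9*t^2)) := by
    apply div_pos ?_ (by positivity)
    nlinarith [mul_nonneg (sub_nonneg.2 h1) (sub_nonneg.2 h2), sq_nonneg (t-1),
      sq_nonneg (t-1.2), sq_nonneg (t-1.3), sq_nonneg t, sq_nonneg (t^2-1),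
      mul_nonneg (mul_nonneg (sub_nonneg.2 h1) (sub_nonneg.2 h2)) (sq_nonneg t),
      mul_nonneg (mul_nonneg (sub_nonneg.2 h1) (sub_nonneg.2 h2)) (sq_nonneg (t-1)),
      mul_nonneg (mul_nonneg (sub_nonneg.2 h1) (sub_nonneg.2 h2)) (sq_nonneg (t^2-1))]
  linarith [e ▸ hpos]

lemma Qnonneg {t : ℝ} (h1 : 2/3 ≤ t) (h2 : t ≤ 1.4) :
    0 ≤ t - t^3/6 + t^5/40 - t^7/336 - 5*t^9/13824 := by
  have ht0 : (0:ℝ) < t := by linarith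
  have hb2 : t^2 ≤ 1.96 := by nlinarith
  have hb6 : t^6 ≤ 7.53 := by nlinarith [sq_nonneg (t^2), sq_nonneg (t^3)]
  have hb8 : t^8 ≤ 14.76 := by nlinarith [sq_nonneg (t^2), sq_nonneg (t^4), sq_nonneg (t^3)]
  have hinner : 0 ≤ 1 - t^2/6 + t^4/40 - t^6/336 - 5*t^8/13824 := by
    nlinarith [sq_nonneg (t^2)]
  calc (0:ℝ) ≤ t * (1 - t^2/6 + t^4/40 - t^6/336 - 5*t^8/13824) :=
        mul_nonneg ht0.le hinner
    _ = t - t^3/6 + t^5/40 - t^7/336 - 5*t^9/13824 := by ring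

lemma polyB {t : ℝ} (h : 1.4 ≤ t) : 9*t < 5.0132*(1 + t^2/2 + t^4/8 + t^6/48) := by
  nlinarith [sq_nonneg (t-1.4), sq_nonneg (t^2-2), sq_nonneg t, sq_nonneg (t-1),
    sq_nonneg (t^3 - 2*t)]

set_option maxHeartbeats 1000000 in
lemma key {t : ℝ} (ht : 2/3 ≤ t) :
    1 - 2/(9*t^2) < (gaussianReal 0 1 (Set.Iic t)).toReal := by
  have ht0 : (0:ℝ) < t := by linarith
  have hint := integrable_gaussianPDFReal 0 1
  have hc1 := lt_sqrt2pi
  have hc2 := sqrt2pi_lt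
  have hcpos := sqrt2pi_pos
  set c := Real.sqrt (2 * Real.pi) with hc
  rw [cdf_eq]
  rcases le_total t 1.4 with h14 | h14
  · -- small t
    have hsplit : ∫ x in Set.Iic t, gaussianPDFReal 0 1 x
        = (∫ x in Set.Iic (0:ℝ), gaussianPDFReal 0 1 x)
          + ∫ x in Set.Ioc (0:ℝ) t, gaussianPDFReal 0 1 x := by
      rw [← setIntegral_union (Set.Iic_disjoint_Ioc le_rfl) measurableSet_Ioc
        hint.integrableOn hint.integrableOn, Set.Iic_union_Ioc_eq_Iic ht0.le]
    have heval : ∫ x in Set.Ioc (0:ℝ) t,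
        (c⁻¹ * (1 - x^2/2 + x^4/8 - x^6/48 - 5*x^8/1536))
        = c⁻¹ * (t - t^3/6 + t^5/40 - t^7/336 - 5*t^9/13824) := by
      rw [← intervalIntegral.integral_of_le ht0.le, intervalIntegral.integral_const_mul,
        intervalIntegral.integral_eq_sub_of_hasDerivAt (fun x _ => hasDerivAt_F x)
          (Continuous.intervalIntegrable (by fun_prop) 0 t)]
      norm_num
    have hmono : c⁻¹ * (t - t^3/6 + t^5/40 - t^7/336 - 5*t^9/13824)
        ≤ ∫ x in Set.Ioc (0:ℝ) t, gaussianPDFReal 0 1 x := by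
      rw [← heval]
      apply setIntegral_mono_on
        ((Continuous.integrableOn_Ioc (by fun_prop)))
        hint.integrableOn measurableSet_Ioc
      intro x hx
      rw [pdf0_eq]
      exact mul_le_mul_of_nonneg_left (exp_lb hx.1.le (hx.2.trans h14))
        (inv_nonneg.2 hcpos.le)
    have hQ := Qnonneg ht h14
    have hcomp : (t - t^3/6 + t^5/40 - t^7/336 - 5*t^9/13824)/2.5067
        ≤ c⁻¹ * (t - t^3/6 + t^5/40 - t^7/336 - 5*t^9/13824) := by
      rw [div_eq_mul_inv, mul_comm]
      gcongr
    rw [hsplit, half]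
    have := polyA ht h14
    linarith
  · -- large t
    have h1 : ∫ x in Set.Iic t, gaussianPDFReal 0 1 x
        = 1 - ∫ x in Set.Ioi t, gaussianPDFReal 0 1 x := by
      have := intervalIntegral.integral_Iic_add_Ioi (b := t)
        hint.integrableOn hint.integrableOn
      rw [total_eq_one] at this
      linarith
    have htail : ∫ x in Set.Ioi t, gaussianPDFReal 0 1 x
        ≤ c⁻¹/t * Real.exp (-(t^2/2)) := by
      have hmono : ∫ x in Set.Ioi t, gaussianPDFReal 0 1 x
          ≤ ∫ x in Set.Ioi t, c⁻¹/t * (x * Real.exp (-(x^2/2))) := by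
        apply setIntegral_mono_on hint.integrableOn
          ((tail_integrableOn ht0).const_mul _) measurableSet_Ioi
        intro x hx
        rw [pdf0_eq]
        rw [Set.mem_Ioi] at hx
        have hx0 : 0 < x := ht0.trans hx
        have h1x : 1 ≤ x / t := (one_le_div ht0).2 hx.le
        have := mul_le_mul_of_nonneg_left h1x
          (mul_nonneg (inv_nonneg.2 hcpos.le) (Real.exp_pos (-(x^2/2))).le)
        calc c⁻¹ * Real.exp (-(x^2/2))
            = c⁻¹ * Real.exp (-(x^2/2)) * 1 := by ring
          _ ≤ c⁻¹ * Real.exp (-(x^2/2)) * (x/t) := by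
              apply mul_le_mul_of_nonneg_left h1x
              positivity
          _ = c⁻¹/t * (x * Real.exp (-(x^2/2))) := by ring
      rw [integral_const_mul, tail_integral ht0] at hmono
      exact hmono
    have hexp : 1 + t^2/2 + t^4/8 + t^6/48 ≤ Real.exp (t^2/2) := by
      have hy : (0:ℝ) ≤ t^2/2 := by positivity
      have := Real.sum_le_exp_of_nonneg hy 4
      simp [Finset.sum_range_succ, Nat.factorial] at this
      nlinarith [this]
    have hS : (0:ℝ) < 1 + t^2/2 + t^4/8 + t^6/48 := by positivity
    have hexp' : Real.exp (-(t^2/2)) ≤ (1 + t^2/2 + t^4/8 + t^6/48)⁻¹ := by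
      rw [Real.exp_neg]
      exact inv_anti₀ hS hexp
    have hB := polyB h14
    -- show  c⁻¹/t * exp(-(t^2/2)) < 2/(9*t^2)
    have hfin : c⁻¹/t * Real.exp (-(t^2/2)) < 2/(9*t^2) := by
      have step1 : c⁻¹/t * Real.exp (-(t^2/2))
          ≤ 2.5066⁻¹/t * (1 + t^2/2 + t^4/8 + t^6/48)⁻¹ := by
        gcongr
      have step2 : 2.5066⁻¹/t * (1 + t^2/2 + t^4/8 + t^6/48)⁻¹ < 2/(9*t^2) := by
        rw [show (2.5066:ℝ)⁻¹/t * (1 + t^2/2 + t^4/8 + t^6/48)⁻¹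
            = 1/(2.5066 * t * (1 + t^2/2 + t^4/8 + t^6/48)) by
          rw [one_div, mul_inv, mul_inv, div_eq_mul_inv],
          div_lt_div_iff₀ (by positivity) (by positivity)]
        nlinarith [mul_lt_mul_of_pos_left hB ht0, ht0, hS]
      linarith
    rw [h1]
    linarith

end PhiSUAux

/-- For `γ ∈ (1/2, 1)`, `Φ((2/3)√(1/(2(1−γ)))) > γ`, i.e. `φ_SU(γ) > Φ⁻¹(γ)`,
where `Φ` is the standard normal c.d.f. -/
theorem phi_SU_gt_probit :
    ∀ γ : ℝ, γ ∈ Set.Ioo (1 / 2 : ℝ) 1 →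
      γ < (gaussianReal 0 1
            (Set.Iic (2 / 3 * Real.sqrt (1 / (2 * (1 - γ)))))).toReal := by
  rintro γ ⟨hg1, hg2⟩
  have hu : 0 < 1 - γ := by linarith
  set s := Real.sqrt (1 / (2 * (1 - γ))) with hs
  have harg : (1:ℝ) ≤ 1 / (2 * (1 - γ)) := by
    rw [le_div_iff₀ (by positivity)]
    linarith
  have hs1 : 1 ≤ s := by
    rw [hs]
    calc (1:ℝ) = Real.sqrt 1 := Real.sqrt_one.symm
      _ ≤ s := Real.sqrt_le_sqrt harg
  have hssq : s^2 = 1 / (2 * (1 - γ)) := Real.sq_sqrt (by positivity)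
  have ht : 2/3 ≤ 2/3 * s := by linarith
  have hkey := PhiSUAux.key ht
  have heq : 1 - 2/(9*(2/3*s)^2) = γ := by
    have : 9*(2/3*s)^2 = 4 * s^2 := by ring
    rw [this, hssq]
    field_simp
    ring
  rw [heq] at hkey
  exact hkey
end
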